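/- For any program P over atoms U, P is super-coherent if and only if P is uniformly equivalent to the empty program under projection to the empty alphabet with context alphabet U, i.e., for every F ⊆ U, { I ∩ ∅ : I ∈ AS(P ∪ F) } = { I ∩ ∅ : I ∈ AS(∅ ∪ F) }. -/

import Mathlib

structure Rule (A : Type) where
  head : Set A
  pos : Set A
  neg : Set A

abbrev Program (A : Type) := Set (Rule A)

def satRule {A : Type} (I : Set A) (r : Rule A) : Prop :=
  r.pos ⊆ I → r.neg ∩ I = ∅ → (r.head ∩ I).Nonempty

def isModel {A : Type} (P : Program A) (I : Set A) : Prop := ∀ r ∈ P, satRule I r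

def reduct {A : Type} (P : Program A) (K : Set A) : Program A :=
  {r' | ∃ r ∈ P, r.neg ∩ K = ∅ ∧ r' = ⟨r.head, r.pos, ∅⟩}

def isAnswerSet {A : Type} (P : Program A) (M : Set A) : Prop :=
  isModel (reduct P M) M ∧ ∀ N ⊆ M, isModel (reduct P M) N → N = M

def factsOf {A : Type} (F : Set A) : Program A := {r | ∃ a ∈ F, r = ⟨{a}, ∅, ∅⟩}

def superCoherent {A : Type} (P : Program A) : Prop :=
  ∀ F : Set A, ∃ M, isAnswerSet (P ∪ factsOf F) M

def atomsOf {A : Type} (P : Program A) : Set A :=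
  ⋃ r ∈ P, (r.head ∪ r.pos ∪ r.neg)

lemma reduct_union {A : Type} (P Q : Program A) (K : Set A) :
    reduct (P ∪ Q) K = reduct P K ∪ reduct Q K := by
  ext r'
  simp only [reduct, Set.mem_setOf_eq, Set.mem_union]
  constructor
  · rintro ⟨r, (hr | hr), h1, h2⟩
    · exact Or.inl ⟨r, hr, h1, h2⟩
    · exact Or.inr ⟨r, hr, h1, h2⟩
  · rintro (⟨r, hr, h1, h2⟩ | ⟨r, hr, h1, h2⟩)
    · exact ⟨r, Or.inl hr, h1, h2⟩
    · exact ⟨r, Or.inr hr, h1, h2⟩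

lemma reduct_facts {A : Type} (F : Set A) (K : Set A) :
    reduct (factsOf F) K = factsOf F := by
  ext r'
  simp only [reduct, factsOf, Set.mem_setOf_eq]
  constructor
  · rintro ⟨r, ⟨a, ha, rfl⟩, _, rfl⟩
    exact ⟨a, ha, rfl⟩
  · rintro ⟨a, ha, rfl⟩
    exact ⟨⟨{a}, ∅, ∅⟩, ⟨a, ha, rfl⟩, by simp, rfl⟩

lemma sat_fact_iff {A : Type} (a : A) (I : Set A) :
    satRule I ⟨{a}, ∅, ∅⟩ ↔ a ∈ I := by
  simp [satRule, Set.singleton_inter_nonempty]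

lemma model_facts_iff {A : Type} (F I : Set A) :
    isModel (factsOf F) I ↔ F ⊆ I := by
  constructor
  · intro h a ha
    exact (sat_fact_iff a I).1 (h _ ⟨a, ha, rfl⟩)
  · rintro h r ⟨a, ha, rfl⟩
    exact (sat_fact_iff a I).2 (h ha)

lemma facts_isAnswerSet {A : Type} (F : Set A) : isAnswerSet (factsOf F) F := by
  constructor
  · rw [reduct_facts, model_facts_iff]
  · intro N hN hmod
    rw [reduct_facts, model_facts_iff] at hmod
    exact le_antisymm hN hmod

lemma neg_inter_union {A : Type} {P : Program A} {U M G : Set A}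
    (hU : atomsOf P ⊆ U) (hG : G ∩ U = ∅) :
    reduct P (M ∪ G) = reduct P M := by
  have key : ∀ r ∈ P, r.neg ∩ (M ∪ G) = r.neg ∩ M := by
    intro r hr
    have hn : r.neg ⊆ U := fun x hx => hU (Set.mem_biUnion hr (by simp [hx]))
    rw [Set.inter_union_distrib_left]
    have : r.neg ∩ G = ∅ := by
      apply Set.eq_empty_iff_forall_notMem.2
      intro x ⟨hx1, hx2⟩
      exact Set.eq_empty_iff_forall_notMem.1 hG x ⟨hx2, hn hx1⟩
    simp [this]
  ext r'
  simp only [reduct, Set.mem_setOf_eq]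
  constructor
  · rintro ⟨r, hr, h1, h2⟩
    exact ⟨r, hr, (key r hr) ▸ h1, h2⟩
  · rintro ⟨r, hr, h1, h2⟩
    exact ⟨r, hr, (key r hr).symm ▸ h1, h2⟩

lemma lift_answerSet {A : Type} (P : Program A) (U F M : Set A)
    (hU : atomsOf P ⊆ U)
    (hM : isAnswerSet (P ∪ factsOf (F ∩ U)) M) :
    isAnswerSet (P ∪ factsOf F) (M ∪ (F \ U)) := by
  set G := F \ U with hGdef
  have hGU : G ∩ U = ∅ := by
    apply Set.eq_empty_iff_forall_notMem.2
    rintro x ⟨⟨_, hx2⟩, hx3⟩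
    exact hx2 hx3
  have hred : reduct (P ∪ factsOf F) (M ∪ G) = reduct P M ∪ factsOf F := by
    rw [reduct_union, reduct_facts, neg_inter_union hU hGU]
  have hredM : reduct (P ∪ factsOf (F ∩ U)) M = reduct P M ∪ factsOf (F ∩ U) := by
    rw [reduct_union, reduct_facts]
  have hFU_M : F ∩ U ⊆ M := by
    intro a ha
    exact (sat_fact_iff a M).1 (hM.1 _ (by rw [hredM]; exact Or.inr ⟨a, ha, rfl⟩))
  have hhead : ∀ r ∈ P, r.head ⊆ U := by
    intro r hr x hx
    exact hU (Set.mem_biUnion hr (by simp [hx]))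
  have hpos : ∀ r ∈ P, r.pos ⊆ U := by
    intro r hr x hx
    exact hU (Set.mem_biUnion hr (by simp [hx]))
  have hUMG : U ∩ (M ∪ G) ⊆ M := by
    intro x ⟨hxU, hxMG⟩
    rcases hxMG with h | h
    · exact h
    · exact (Set.eq_empty_iff_forall_notMem.1 hGU x ⟨h, hxU⟩).elim
  constructor
  · -- model
    rw [hred]
    rintro r' (hr' | ⟨a, ha, rfl⟩)
    · obtain ⟨r, hr, hneg, rfl⟩ := hr'
      intro hp _
      have hpM : r.pos ⊆ M := fun x hx => hUMG ⟨hpos r hr hx, hp hx⟩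
      have : (r.head ∩ M).Nonempty := by
        have := hM.1 ⟨r.head, r.pos, ∅⟩ (by rw [hredM]; exact Or.inl ⟨r, hr, hneg, rfl⟩)
        exact this hpM (by simp)
      exact this.mono (Set.inter_subset_inter_right _ Set.subset_union_left)
    · apply (sat_fact_iff a _).2
      by_cases haU : a ∈ U
      · exact Or.inl (hFU_M ⟨ha, haU⟩)
      · exact Or.inr ⟨ha, haU⟩
  · -- minimality
    intro N hN hmod
    rw [hred] at hmod
    have hFN : F ⊆ N := by
      intro a ha
      exact (sat_fact_iff a N).1 (hmod _ (Or.inr ⟨a, ha, rfl⟩))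
    have hN0 : N ∩ M = M := by
      apply hM.2 _ Set.inter_subset_right
      rw [hredM]
      rintro r' (hr' | ⟨a, ha, rfl⟩)
      · obtain ⟨r, hr, hneg, rfl⟩ := hr'
        intro hp _
        have : (r.head ∩ N).Nonempty := hmod ⟨r.head, r.pos, ∅⟩ (Or.inl ⟨r, hr, hneg, rfl⟩)
          (fun x hx => Set.inter_subset_left (hp hx)) (by simp)
        obtain ⟨x, hx1, hx2⟩ := this
        exact ⟨x, hx1, hx2, hUMG ⟨hhead r hr hx1, hN hx2⟩⟩
      · exact (sat_fact_iff a _).2 ⟨hFN ha.1, hFU_M ha⟩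
    apply le_antisymm hN
    intro x hx
    rcases hx with h | h
    · rw [← hN0] at h; exact h.1
    · exact hFN h.1

lemma empty_union_facts_answerSets {A : Type} (F : Set A) :
    isAnswerSet ((∅ : Program A) ∪ factsOf F) F := by
  rw [Set.empty_union]
  exact facts_isAnswerSet F

/-- P is super-coherent iff P is uniformly equivalent to the empty program under
projection to the empty alphabet, with context alphabet U ⊇ At(P). -/
theorem superCoherent_iff_uniform_equiv_proj {A : Type} (P : Program A) (U : Set A)
    (hU : atomsOf P ⊆ U) :
    superCoherent P ↔ ∀ F ⊆ U,
      {s : Set A | ∃ I, isAnswerSet (P ∪ factsOf F) I ∧ s = I ∩ (∅ : Set A)} =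
      {s : Set A | ∃ I, isAnswerSet ((∅ : Program A) ∪ factsOf F) I ∧ s = I ∩ (∅ : Set A)} := by
  constructor
  · intro hsc F _
    ext s
    simp only [Set.mem_setOf_eq, Set.inter_empty]
    constructor
    · rintro ⟨I, _, rfl⟩
      exact ⟨F, empty_union_facts_answerSets F, rfl⟩
    · rintro ⟨I, _, rfl⟩
      obtain ⟨M, hM⟩ := hsc F
      exact ⟨M, hM, rfl⟩
  · intro h F
    have hFU : F ∩ U ⊆ U := Set.inter_subset_right
    have := h (F ∩ U) hFU
    have hmem : (∅ : Set A) ∈ {s : Set A | ∃ I, isAnswerSet (P ∪ factsOf (F ∩ U)) I ∧ s = I ∩ (∅ : Set A)} := by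
      rw [this]
      exact ⟨F ∩ U, empty_union_facts_answerSets _, by simp⟩
    obtain ⟨M, hM, _⟩ := hmem
    exact ⟨M ∪ (F \ U), lift_answerSet P U F M hU hM⟩
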